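/- arXiv:math/0409330 — 2 statements merged into one kernel-verified Lean document; each statement's English description precedes it below -/
import Mathlib

section
/- For each real number q with 0 < q ≤ 2 there is a positive real number C(q), depending only on q, such that for every positive integer ℓ and every function f on B_ℓ that is a linear combination of the Rademacher functions r_1, …, r_ℓ, one has ‖f‖_2 ≤ C(q) · ‖f‖_q (Khintchine's inequality, lower half). -/
open Finset

/-- The value `±1 ∈ ℝ` attached to a coordinate of a point of `B_ℓ = {−1,1}^ℓ`,
modelled as `Fin ℓ → Bool`.  `sgn (x j)` is the Rademacher function `r_j` at `x`. -/
def sgn (b : Bool) : ℝ := if b then 1 else -1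

/-- `‖f‖_p = (2^{−ℓ} Σ_{x ∈ B_ℓ} |f(x)|ᵖ)^{1/p}` for a function `f` on `B_ℓ`. -/
noncomputable def pnorm (ℓ : ℕ) (p : ℝ) (f : (Fin ℓ → Bool) → ℝ) : ℝ :=
  ((2:ℝ) ^ (-(ℓ:ℤ)) * ∑ x : Fin ℓ → Bool, |f x| ^ p) ^ (1 / p)

lemma key (ℓ : ℕ) (c : Fin ℓ → ℕ) :
    ∑ x : Fin ℓ → Bool, ∏ m, sgn (x m) ^ c m = ∏ m, ((1:ℝ) + (-1)^(c m)) := by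
  rw [← Fintype.prod_sum (f := fun m (b : Bool) => sgn b ^ c m)]
  refine Finset.prod_congr rfl fun m _ => ?_
  simp [Fintype.sum_bool, sgn]

lemma rade_prod (ℓ : ℕ) (i : Fin ℓ) (x : Fin ℓ → Bool) :
    sgn (x i) = ∏ m, sgn (x m) ^ (if m = i then 1 else 0) := by
  simp only [pow_ite, pow_one, pow_zero]
  rw [Finset.prod_ite_eq' univ i (fun m => sgn (x m))]
  simp

lemma prod_parity (ℓ : ℕ) (c : Fin ℓ → ℕ) (hc : ∀ m, Even (c m)) :
    ∏ m, ((1:ℝ) + (-1)^(c m)) = 2^ℓ := by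
  calc ∏ m : Fin ℓ, ((1:ℝ) + (-1)^(c m)) = ∏ m : Fin ℓ, (2:ℝ) :=
        Finset.prod_congr rfl fun m _ => by rw [(hc m).neg_one_pow]; norm_num
    _ = 2^ℓ := by simp

lemma prod_parity' (ℓ : ℕ) (c : Fin ℓ → ℕ) (m : Fin ℓ) (hmm : ¬ Even (c m)) :
    ∏ m, ((1:ℝ) + (-1)^(c m)) = 0 := by
  refine Finset.prod_eq_zero (mem_univ m) ?_
  rw [(Nat.not_even_iff_odd.mp hmm).neg_one_pow]; ring

lemma S2 (ℓ : ℕ) (i j : Fin ℓ) :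
    ∑ x : Fin ℓ → Bool, sgn (x i) * sgn (x j)
      = if i = j then (2:ℝ)^ℓ else 0 := by
  have h : ∀ x : Fin ℓ → Bool, sgn (x i) * sgn (x j)
      = ∏ m, sgn (x m) ^ ((if m = i then 1 else 0) + (if m = j then 1 else 0)) := by
    intro x
    simp only [pow_add, Finset.prod_mul_distrib, ← rade_prod]
  rw [Finset.sum_congr rfl (fun x _ => h x), key]
  by_cases hij : i = j
  · subst hij
    rw [if_pos rfl, prod_parity]
    intro m; by_cases hm : m = i <;> simp [hm]
  · rw [if_neg hij, prod_parity' ℓ _ i]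
    simp [hij, Nat.even_iff]

lemma S4 (ℓ : ℕ) (i j k l : Fin ℓ) :
    ∑ x : Fin ℓ → Bool, sgn (x i) * sgn (x j) * sgn (x k) * sgn (x l)
      = if (i = j ∧ k = l) ∨ (i = k ∧ j = l) ∨ (i = l ∧ j = k) then (2:ℝ)^ℓ else 0 := by
  have h : ∀ x : Fin ℓ → Bool, sgn (x i) * sgn (x j) * sgn (x k) * sgn (x l)
      = ∏ m, sgn (x m) ^ ((if m = i then 1 else 0) + (if m = j then 1 else 0)
          + (if m = k then 1 else 0) + (if m = l then 1 else 0)) := by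
    intro x
    simp only [pow_add, Finset.prod_mul_distrib, ← rade_prod]
  rw [Finset.sum_congr rfl (fun x _ => h x), key]
  set c : Fin ℓ → ℕ := fun m => (if m = i then 1 else 0) + (if m = j then 1 else 0)
          + (if m = k then 1 else 0) + (if m = l then 1 else 0) with hc
  have hiff : (∀ m, Even (c m)) ↔ ((i = j ∧ k = l) ∨ (i = k ∧ j = l) ∨ (i = l ∧ j = k)) := by
    constructor
    · intro h'
      have hi := h' i
      have hj := h' j
      have hk := h' k
      have hl := h' l
      simp only [hc, Nat.even_iff] at hi hj hk hl
      by_cases h1 : i = j <;> by_cases h2 : i = k <;> by_cases h3 : i = l <;>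
        by_cases h4 : j = k <;> by_cases h5 : j = l <;> by_cases h6 : k = l <;>
        simp_all <;> omega
    · rintro (⟨rfl, rfl⟩ | ⟨rfl, rfl⟩ | ⟨rfl, rfl⟩) m <;>
      · simp only [hc, Nat.even_iff]
        split_ifs <;> simp_all
  by_cases hall : ∀ m, Even (c m)
  · rw [if_pos (hiff.mp hall), prod_parity ℓ c hall]
  · rw [if_neg (fun hp => hall (hiff.mpr hp))]
    obtain ⟨m, hm⟩ := not_forall.mp hall
    exact prod_parity' ℓ c m hm

lemma A2 (ℓ : ℕ) (a : Fin ℓ → ℝ) :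
    ∑ x : Fin ℓ → Bool, (∑ j, a j * sgn (x j))^2
      = 2^ℓ * ∑ j, (a j)^2 := by
  have h : ∀ x : Fin ℓ → Bool, (∑ j, a j * sgn (x j))^2
      = ∑ i, ∑ j, (a i * a j) * (sgn (x i) * sgn (x j)) := by
    intro x
    rw [sq, Finset.sum_mul_sum]
    exact Finset.sum_congr rfl fun i _ => Finset.sum_congr rfl fun j _ => by ring
  rw [Finset.sum_congr rfl (fun x _ => h x), Finset.sum_comm]
  have h2 : ∀ i : Fin ℓ, ∑ x : Fin ℓ → Bool, ∑ j, (a i * a j) * (sgn (x i) * sgn (x j))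
      = ∑ j, (a i * a j) * ∑ x : Fin ℓ → Bool, sgn (x i) * sgn (x j) := by
    intro i
    rw [Finset.sum_comm]
    exact Finset.sum_congr rfl fun j _ => by rw [← Finset.mul_sum]
  rw [Finset.sum_congr rfl fun i _ => h2 i]
  have h3 : ∀ i : Fin ℓ, ∑ j, (a i * a j) * ∑ x : Fin ℓ → Bool, sgn (x i) * sgn (x j)
      = a i ^ 2 * 2^ℓ := by
    intro i
    rw [Finset.sum_congr rfl fun j (_ : j ∈ univ) => by rw [S2 ℓ i j]]
    simp [mul_ite, Finset.sum_ite_eq, sq]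
  rw [Finset.sum_congr rfl fun i _ => h3 i, ← Finset.sum_mul]
  ring

lemma pt_bound (ℓ : ℕ) (a : Fin ℓ → ℝ) (i j k l : Fin ℓ) :
    (a i * a j * a k * a l) *
      (if (i = j ∧ k = l) ∨ (i = k ∧ j = l) ∨ (i = l ∧ j = k) then (2:ℝ)^ℓ else 0)
    ≤ (2:ℝ)^ℓ * ((if i = j ∧ k = l then a i ^ 2 * a k ^ 2 else 0)
        + (if i = k ∧ j = l then a i ^ 2 * a j ^ 2 else 0)
        + (if i = l ∧ j = k then a i ^ 2 * a j ^ 2 else 0)) := by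
  have n1 : (0:ℝ) ≤ (if i = j ∧ k = l then a i ^ 2 * a k ^ 2 else 0) := by positivity
  have n2 : (0:ℝ) ≤ (if i = k ∧ j = l then a i ^ 2 * a j ^ 2 else 0) := by positivity
  have n3 : (0:ℝ) ≤ (if i = l ∧ j = k then a i ^ 2 * a j ^ 2 else 0) := by positivity
  have hp : (0:ℝ) < 2^ℓ := by positivity
  by_cases h : (i = j ∧ k = l) ∨ (i = k ∧ j = l) ∨ (i = l ∧ j = k)
  · rw [if_pos h]
    rcases h with ⟨rfl, rfl⟩ | ⟨rfl, rfl⟩ | ⟨rfl, rfl⟩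
    · have : (if i = i ∧ k = k then a i ^ 2 * a k ^ 2 else 0) = a i ^ 2 * a k ^ 2 := by simp
      nlinarith [n2, n3]
    · have : (if i = i ∧ j = j then a i ^ 2 * a j ^ 2 else 0) = a i ^ 2 * a j ^ 2 := by simp
      nlinarith [n1, n3]
    · have : (if i = i ∧ j = j then a i ^ 2 * a j ^ 2 else 0) = a i ^ 2 * a j ^ 2 := by simp
      nlinarith [n1, n2]
  · rw [if_neg h, mul_zero]
    positivity

lemma A4 (ℓ : ℕ) (a : Fin ℓ → ℝ) :
    ∑ x : Fin ℓ → Bool, (∑ j, a j * sgn (x j))^4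
      ≤ 3 * 2^ℓ * (∑ j, (a j)^2)^2 := by
  have e1 : ∀ x : Fin ℓ → Bool, (∑ j, a j * sgn (x j))^2
      = ∑ i, ∑ j, (a i * sgn (x i)) * (a j * sgn (x j)) := fun x => by
    rw [sq, Finset.sum_mul_sum]
  have e2 : ∀ x : Fin ℓ → Bool, (∑ j, a j * sgn (x j))^4
      = ∑ i, ∑ j, ∑ k, ∑ l, (a i * a j * a k * a l)
          * (sgn (x i) * sgn (x j) * sgn (x k) * sgn (x l)) := by
    intro x
    have h4 : (∑ j, a j * sgn (x j))^4
        = (∑ j, a j * sgn (x j))^2 * (∑ j, a j * sgn (x j))^2 := by ring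
    rw [h4, e1, Finset.sum_mul_sum]
    refine Finset.sum_congr rfl fun i _ => ?_
    refine Finset.sum_congr rfl fun j _ => ?_
    rw [Finset.sum_mul_sum]
    refine Finset.sum_congr rfl fun k _ => ?_
    refine Finset.sum_congr rfl fun l _ => ?_
    ring
  rw [Finset.sum_congr rfl (fun x _ => e2 x), Finset.sum_comm]
  have swap1 : ∀ i : Fin ℓ,
      ∑ x : Fin ℓ → Bool, ∑ j, ∑ k, ∑ l, (a i * a j * a k * a l)
          * (sgn (x i) * sgn (x j) * sgn (x k) * sgn (x l))
      = ∑ j, ∑ k, ∑ l, (a i * a j * a k * a l)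
          * ∑ x : Fin ℓ → Bool, sgn (x i) * sgn (x j) * sgn (x k) * sgn (x l) := by
    intro i
    rw [Finset.sum_comm]
    refine Finset.sum_congr rfl fun j _ => ?_
    rw [Finset.sum_comm]
    refine Finset.sum_congr rfl fun k _ => ?_
    rw [Finset.sum_comm]
    refine Finset.sum_congr rfl fun l _ => ?_
    rw [← Finset.mul_sum]
  rw [Finset.sum_congr rfl fun i _ => swap1 i]
  have bnd : ∑ i, ∑ j, ∑ k, ∑ l, (a i * a j * a k * a l)
          * ∑ x : Fin ℓ → Bool, sgn (x i) * sgn (x j) * sgn (x k) * sgn (x l)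
      ≤ ∑ i, ∑ j, ∑ k : Fin ℓ, ∑ l : Fin ℓ,
          (2:ℝ)^ℓ * ((if i = j ∧ k = l then a i ^ 2 * a k ^ 2 else 0)
        + (if i = k ∧ j = l then a i ^ 2 * a j ^ 2 else 0)
        + (if i = l ∧ j = k then a i ^ 2 * a j ^ 2 else 0)) := by
    refine Finset.sum_le_sum fun i _ => Finset.sum_le_sum fun j _ =>
      Finset.sum_le_sum fun k _ => Finset.sum_le_sum fun l _ => ?_
    rw [S4]
    exact pt_bound ℓ a i j k l
  refine le_trans bnd (le_of_eq ?_)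
  have sum1 : ∑ i, ∑ j, ∑ k : Fin ℓ, ∑ l : Fin ℓ,
      (if i = j ∧ k = l then a i ^ 2 * a k ^ 2 else 0) = (∑ j, (a j)^2)^2 := by
    rw [sq, Finset.sum_mul_sum]
    refine Finset.sum_congr rfl fun i _ => ?_
    simp [ite_and, Finset.sum_ite_eq, Finset.sum_ite_eq']
  have sum2 : ∑ i, ∑ j, ∑ k : Fin ℓ, ∑ l : Fin ℓ,
      (if i = k ∧ j = l then a i ^ 2 * a j ^ 2 else 0) = (∑ j, (a j)^2)^2 := by
    rw [sq, Finset.sum_mul_sum]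
    refine Finset.sum_congr rfl fun i _ => ?_
    refine Finset.sum_congr rfl fun j _ => ?_
    simp [ite_and, Finset.sum_ite_eq, Finset.sum_ite_eq']
  have sum3 : ∑ i, ∑ j, ∑ k : Fin ℓ, ∑ l : Fin ℓ,
      (if i = l ∧ j = k then a i ^ 2 * a j ^ 2 else 0) = (∑ j, (a j)^2)^2 := by
    rw [sq, Finset.sum_mul_sum]
    refine Finset.sum_congr rfl fun i _ => ?_
    refine Finset.sum_congr rfl fun j _ => ?_
    rw [Finset.sum_comm]
    simp [ite_and, Finset.sum_ite_eq, Finset.sum_ite_eq']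

  calc ∑ i, ∑ j, ∑ k : Fin ℓ, ∑ l : Fin ℓ,
          (2:ℝ)^ℓ * ((if i = j ∧ k = l then a i ^ 2 * a k ^ 2 else 0)
        + (if i = k ∧ j = l then a i ^ 2 * a j ^ 2 else 0)
        + (if i = l ∧ j = k then a i ^ 2 * a j ^ 2 else 0))
      = (2:ℝ)^ℓ * (∑ i, ∑ j, ∑ k : Fin ℓ, ∑ l : Fin ℓ,
          ((if i = j ∧ k = l then a i ^ 2 * a k ^ 2 else 0)
        + (if i = k ∧ j = l then a i ^ 2 * a j ^ 2 else 0)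
        + (if i = l ∧ j = k then a i ^ 2 * a j ^ 2 else 0))) := by
        simp only [Finset.mul_sum]
    _ = (2:ℝ)^ℓ * ((∑ j, (a j)^2)^2 + (∑ j, (a j)^2)^2 + (∑ j, (a j)^2)^2) := by
        simp only [Finset.sum_add_distrib]
        rw [sum1, sum2, sum3]
    _ = 3 * 2^ℓ * (∑ j, (a j)^2)^2 := by ring

set_option maxHeartbeats 1000000 in
/-- Khintchine's inequality, lower half: for each `0 < q ≤ 2` there is
`C(q) > 0` such that every linear combination `f = Σ_j a_j r_j` of Rademacher functions on
`B_ℓ` satisfies `‖f‖_2 ≤ C(q) ‖f‖_q`. -/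
theorem stmt3 (q : ℝ) (hq0 : 0 < q) (hq2 : q ≤ 2) :
    ∃ C : ℝ, 0 < C ∧ ∀ (ℓ : ℕ), 0 < ℓ → ∀ a : Fin ℓ → ℝ,
      pnorm ℓ 2 (fun x => ∑ j, a j * sgn (x j))
        ≤ C * pnorm ℓ q (fun x => ∑ j, a j * sgn (x j)) := by
  rcases eq_or_lt_of_le hq2 with heq | hlt
  · subst heq
    exact ⟨1, one_pos, fun ℓ _ a => by rw [one_mul]⟩
  refine ⟨(3:ℝ) ^ ((2-q)/(2*q)), Real.rpow_pos_of_pos (by norm_num) _, fun ℓ _ a => ?_⟩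
  set f : (Fin ℓ → Bool) → ℝ := fun x => ∑ j, a j * sgn (x j) with hf
  set T : ℝ := ∑ j, (a j)^2 with hT
  have hT0 : 0 ≤ T := Finset.sum_nonneg fun j _ => sq_nonneg _
  have h4q : (0:ℝ) < 4 - q := by linarith
  have h2q : (0:ℝ) < 2 - q := by linarith
  -- conversions between rpow and pow
  have habs2 : ∀ x : Fin ℓ → Bool, |f x| ^ (2:ℝ) = f x ^ (2:ℕ) := fun x => by
    rw [show (2:ℝ) = ((2:ℕ):ℝ) by norm_num, Real.rpow_natCast, sq_abs]
  have habs4 : ∀ x : Fin ℓ → Bool, |f x| ^ (4:ℝ) = f x ^ (4:ℕ) := fun x => by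
    rw [show (4:ℝ) = ((4:ℕ):ℝ) by norm_num, Real.rpow_natCast,
      show (4:ℕ) = 2*2 from rfl, pow_mul, pow_mul, sq_abs]
  have hsum2 : ∑ x : Fin ℓ → Bool, |f x| ^ (2:ℝ) = 2^ℓ * T := by
    rw [Finset.sum_congr rfl fun x _ => habs2 x]; exact A2 ℓ a
  have hsum4 : ∑ x : Fin ℓ → Bool, |f x| ^ (4:ℝ) ≤ 3 * 2^ℓ * T^2 := by
    rw [Finset.sum_congr rfl fun x _ => habs4 x]; exact A4 ℓ a
  have hpow2 : (2:ℝ) ^ (-(ℓ:ℤ)) * 2^ℓ = 1 := by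
    rw [zpow_neg, zpow_natCast]
    exact inv_mul_cancel₀ (by positivity)
  have hpnorm2 : pnorm ℓ 2 f = T ^ ((1:ℝ)/2) := by
    rw [pnorm, hsum2, ← mul_assoc, hpow2, one_mul]
  -- trivial case T = 0
  rcases eq_or_lt_of_le hT0 with hT0' | hTpos
  · have hfz : ∀ x : Fin ℓ → Bool, f x = 0 := by
      intro x
      have : ∀ j, a j = 0 := by
        intro j
        have := (Finset.sum_eq_zero_iff_of_nonneg (fun j _ => sq_nonneg (a j))).mp hT0'.symm j (mem_univ j)
        exact pow_eq_zero_iff (by norm_num) |>.mp this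
      simp [hf, this]
    have h2 : pnorm ℓ 2 f = 0 := by
      rw [hpnorm2, ← hT0', Real.zero_rpow (by norm_num)]
    have hq' : pnorm ℓ q f = 0 := by
      rw [pnorm]
      have : ∀ x : Fin ℓ → Bool, |f x| ^ q = 0 := fun x => by
        rw [hfz x, abs_zero, Real.zero_rpow hq0.ne']
      rw [Finset.sum_congr rfl fun x _ => this x, Finset.sum_const_zero, mul_zero,
        Real.zero_rpow (one_div_ne_zero hq0.ne')]
    rw [h2, hq', mul_zero]
  -- main case T > 0
  set Aq : ℝ := ∑ x : Fin ℓ → Bool, |f x| ^ q with hAq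
  have hAq0 : 0 ≤ Aq := Finset.sum_nonneg fun x _ => Real.rpow_nonneg (abs_nonneg _) _
  set p : ℝ := (4-q)/2 with hp
  set p' : ℝ := (4-q)/(2-q) with hp'
  have hpq : Real.HolderConjugate p p' := by
    rw [Real.holderConjugate_iff]
    constructor
    · rw [hp, lt_div_iff₀ (by norm_num : (0:ℝ) < 2)]; linarith
    · rw [hp, hp', inv_div, inv_div, ← add_div,
        show 2 + (2-q) = 4-q by ring]
      exact div_self h4q.ne'
  -- Hölder
  have hexp : 2*q/(4-q) + 4*(2-q)/(4-q) = 2 := by field_simp; ring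
  have h1 : (2:ℝ)^ℓ * T ≤ Aq ^ (1/p) * (3 * 2^ℓ * T^2) ^ (1/p') := by
    have hold := Real.inner_le_Lp_mul_Lq_of_nonneg (univ : Finset (Fin ℓ → Bool))
      (f := fun x => |f x| ^ (2*q/(4-q))) (g := fun x => |f x| ^ (4*(2-q)/(4-q))) hpq
      (fun x _ => Real.rpow_nonneg (abs_nonneg _) _)
      (fun x _ => Real.rpow_nonneg (abs_nonneg _) _)
    have e1 : ∀ x : Fin ℓ → Bool,
        |f x| ^ (2*q/(4-q)) * |f x| ^ (4*(2-q)/(4-q)) = |f x| ^ (2:ℝ) := by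
      intro x
      rw [← Real.rpow_add' (abs_nonneg _) (by rw [hexp]; norm_num), hexp]
    have e2 : ∀ x : Fin ℓ → Bool,
        (|f x| ^ (2*q/(4-q))) ^ p = |f x| ^ q := by
      intro x
      rw [← Real.rpow_mul (abs_nonneg _)]
      congr 1
      rw [hp]
      field_simp
    have e3 : ∀ x : Fin ℓ → Bool,
        (|f x| ^ (4*(2-q)/(4-q))) ^ p' = |f x| ^ (4:ℝ) := by
      intro x
      rw [← Real.rpow_mul (abs_nonneg _)]
      congr 1
      rw [hp']
      field_simp
    rw [Finset.sum_congr rfl (fun x _ => e1 x),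
      Finset.sum_congr rfl (fun x _ => e2 x),
      Finset.sum_congr rfl (fun x _ => e3 x), hsum2] at hold
    refine le_trans hold ?_
    have h1p' : 0 ≤ 1/p' := by
      rw [hp']; positivity
    refine mul_le_mul_of_nonneg_left ?_ (Real.rpow_nonneg hAq0 _)
    exact Real.rpow_le_rpow (Finset.sum_nonneg fun x _ => Real.rpow_nonneg (abs_nonneg _) _)
      hsum4 h1p'
  have hAqpos : 0 < Aq := by
    rcases eq_or_lt_of_le hAq0 with h0 | h; swap
    · exact h
    exfalso
    rw [← h0, Real.zero_rpow, zero_mul] at h1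
    · nlinarith [h1, hTpos, pow_pos (show (0:ℝ) < 2 by norm_num) ℓ]
    · rw [hp]; positivity
  -- take logs
  have hlog1 : (ℓ:ℝ) * Real.log 2 + Real.log T
      ≤ (1/p) * Real.log Aq
        + (1/p') * (Real.log 3 + (ℓ:ℝ) * Real.log 2 + 2 * Real.log T) := by
    have lhs_pos : 0 < (2:ℝ)^ℓ * T := by positivity
    have h2 := Real.log_le_log lhs_pos h1
    rw [Real.log_mul (by positivity) hTpos.ne',
      Real.log_mul (by positivity) (by positivity), Real.log_rpow hAqpos,
      Real.log_rpow (by positivity),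
      Real.log_mul (by positivity) (by positivity),
      Real.log_mul (by norm_num) (by positivity), Real.log_pow, Real.log_pow] at h2
    push_cast at h2
    linarith [h2]
  have hkey : q * Real.log T
      ≤ (2-q) * Real.log 3 + 2 * Real.log Aq - 2 * ((ℓ:ℝ) * Real.log 2) := by
    have hip : 1/p = 2/(4-q) := by rw [hp, one_div_div]
    have hip' : 1/p' = (2-q)/(4-q) := by rw [hp', one_div_div]
    rw [hip, hip', div_mul_eq_mul_div, div_mul_eq_mul_div, ← add_div,
      le_div_iff₀ h4q] at hlog1
    nlinarith [hlog1]
  -- final assembly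
  rw [hpnorm2, pnorm, ← hAq]
  have h2z : (0:ℝ) < (2:ℝ) ^ (-(ℓ:ℤ)) := by
    refine zpow_pos ?_ _
    norm_num
  have hMpos : 0 < (2:ℝ) ^ (-(ℓ:ℤ)) * Aq := mul_pos h2z hAqpos
  have hRpos : 0 < (3:ℝ) ^ ((2-q)/(2*q)) * ((2:ℝ) ^ (-(ℓ:ℤ)) * Aq) ^ ((1:ℝ)/q) :=
    mul_pos (Real.rpow_pos_of_pos (by norm_num) _) (Real.rpow_pos_of_pos hMpos _)
  rw [← Real.log_le_log_iff (Real.rpow_pos_of_pos hTpos _) hRpos,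
    Real.log_rpow hTpos, Real.log_mul (Real.rpow_pos_of_pos (by norm_num) _).ne'
      (Real.rpow_pos_of_pos hMpos _).ne',
    Real.log_rpow (by norm_num : (0:ℝ) < 3), Real.log_rpow hMpos,
    Real.log_mul h2z.ne' hAqpos.ne', Real.log_zpow]
  push_cast
  rw [div_mul_eq_mul_div, div_mul_eq_mul_div, one_div_mul_eq_div,
    div_add_div _ _ (by positivity : (2*q:ℝ) ≠ 0) hq0.ne',
    div_le_div_iff₀ (by norm_num : (0:ℝ) < 2) (by positivity : (0:ℝ) < 2*q*q)]
  nlinarith [mul_le_mul_of_nonneg_right hkey hq0.le]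
end

section
/- There is a positive constant C such that for every nonnegative integer m and all complex numbers c_0, …, c_m, the lacunary polynomial f(z) = Σ_{j=0}^m c_j z^{2^j} satisfies (1/2π) ∫_𝕋 |f(z)|⁴ |dz| ≤ C · ((1/2π) ∫_𝕋 |f(z)|² |dz|)², where 𝕋 is the unit circle in the complex plane and the integrals are with respect to arc-length measure |dz|. -/
open Complex Finset intervalIntegral

-- orthogonality
lemma ortho (d : ℤ) : (∫ θ in (0:ℝ)..(2 * Real.pi), Complex.exp (d * θ * I))
    = if d = 0 then (2 * Real.pi : ℂ) else 0 := by
  rcases eq_or_ne d 0 with h | h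
  · simp [h]
  · have hc : (d : ℂ) * I ≠ 0 := by simp [Complex.ext_iff, h]
    have key := integral_exp_mul_complex (a := (0:ℝ)) (b := 2 * Real.pi) hc
    simp only [if_neg h]
    calc (∫ θ in (0:ℝ)..(2 * Real.pi), Complex.exp (d * θ * I))
        = ∫ θ in (0:ℝ)..(2 * Real.pi), Complex.exp ((d * I) * θ) := by
          congr 1; ext θ; ring_nf
      _ = (Complex.exp (d * I * ((2 * Real.pi : ℝ) : ℂ))
            - Complex.exp (d * I * ((0:ℝ):ℂ))) / (d * I) := key
      _ = 0 := by
          have h1 : Complex.exp ((d:ℂ) * I * (2 * (Real.pi:ℂ))) = 1 := by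
            rw [show (d:ℂ) * I * (2 * (Real.pi:ℂ)) = d * (2 * Real.pi * I) by push_cast; ring]
            exact Complex.exp_int_mul_two_pi_mul_I d
          push_cast
          simp [h1]

lemma intg (t : ℂ) (d : ℤ) :
    IntervalIntegrable (fun θ : ℝ => t * Complex.exp (d * θ * I))
      MeasureTheory.volume 0 (2*Real.pi) := by
  apply Continuous.intervalIntegrable
  fun_prop

lemma int_sum {ι : Type*} [Fintype ι] (t : ι → ℂ) (d : ι → ℤ) :
    (∫ θ in (0:ℝ)..(2 * Real.pi), ∑ i, t i * Complex.exp (d i * θ * I))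
      = ∑ i, t i * (if d i = 0 then (2 * Real.pi : ℂ) else 0) := by
  rw [intervalIntegral.integral_finset_sum (fun i _ => intg (t i) (d i))]
  exact Finset.sum_congr rfl fun i _ => by
    rw [intervalIntegral.integral_const_mul, ortho]

-- uniqueness of binary representations of sums of two powers of 2
lemma pow2_unique : ∀ j k l n : ℕ, 2^j + 2^k = 2^l + 2^n →
    (l = j ∧ n = k) ∨ (l = k ∧ n = j) := by
  intro j
  induction j with
  | zero =>
    intro k l n h
    rcases Nat.eq_zero_or_pos k with hk | hk
    · subst hk
      have hl : l = 0 := by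
        by_contra hl
        have h1 : 2 ≤ 2^l := Nat.one_lt_two_pow hl
        have h2 : 1 ≤ 2^n := Nat.one_le_two_pow
        omega
      subst hl
      have hn : (2:ℕ)^n = 1 := by omega
      have : n = 0 := by
        simpa using Nat.pow_right_injective (le_refl 2) (hn.trans (pow_zero 2).symm)
      omega
    · have hk2 : 2 ∣ 2^k := dvd_pow_self 2 hk.ne'
      rcases Nat.eq_zero_or_pos l with hl | hl
      · subst hl
        have h1 : (2:ℕ)^k = 2^n := by omega
        have := Nat.pow_right_injective (le_refl 2) h1
        left; omega
      · rcases Nat.eq_zero_or_pos n with hn | hn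
        · subst hn
          have h1 : (2:ℕ)^k = 2^l := by omega
          have := Nat.pow_right_injective (le_refl 2) h1
          right; omega
        · exfalso
          have hl2 : 2 ∣ 2^l := dvd_pow_self 2 hl.ne'
          have hn2 : 2 ∣ 2^n := dvd_pow_self 2 hn.ne'
          omega
  | succ j ih =>
    intro k l n h
    rcases Nat.eq_zero_or_pos k with hk | hk
    · subst hk
      have hj2 : 2 ∣ 2^(j+1) := dvd_pow_self 2 (Nat.succ_ne_zero j)
      rcases Nat.eq_zero_or_pos l with hl | hl
      · subst hl
        have h1 : (2:ℕ)^(j+1) = 2^n := by omega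
        have := Nat.pow_right_injective (le_refl 2) h1
        right; omega
      · rcases Nat.eq_zero_or_pos n with hn | hn
        · subst hn
          have h1 : (2:ℕ)^(j+1) = 2^l := by omega
          have := Nat.pow_right_injective (le_refl 2) h1
          left; omega
        · exfalso
          have hl2 : 2 ∣ 2^l := dvd_pow_self 2 hl.ne'
          have hn2 : 2 ∣ 2^n := dvd_pow_self 2 hn.ne'
          omega
    · have hj2 : 2 ∣ 2^(j+1) := dvd_pow_self 2 (Nat.succ_ne_zero j)
      have hk2 : 2 ∣ 2^k := dvd_pow_self 2 hk.ne'
      have hbig : 4 ≤ 2^(j+1) + 2^k := by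
        have h1 : 2 ≤ 2^(j+1) := Nat.one_lt_two_pow (Nat.succ_ne_zero j)
        have h2 : 2 ≤ 2^k := Nat.one_lt_two_pow hk.ne'
        omega
      have hl : 0 < l := by
        by_contra hl
        push_neg at hl
        interval_cases l
        rcases Nat.eq_zero_or_pos n with hn | hn
        · subst hn; omega
        · have hn2 : 2 ∣ 2^n := dvd_pow_self 2 hn.ne'
          omega
      have hn : 0 < n := by
        by_contra hn
        push_neg at hn
        interval_cases n
        rcases Nat.eq_zero_or_pos l with hl0 | hl0
        · omega
        · have hl2 : 2 ∣ 2^l := dvd_pow_self 2 hl0.ne'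
          omega
      obtain ⟨k', rfl⟩ := Nat.exists_eq_succ_of_ne_zero hk.ne'
      obtain ⟨l', rfl⟩ := Nat.exists_eq_succ_of_ne_zero hl.ne'
      obtain ⟨n', rfl⟩ := Nat.exists_eq_succ_of_ne_zero hn.ne'
      have h' : 2^j + 2^k' = 2^l' + 2^n' := by
        have e1 : (2:ℕ)^(j+1) = 2 * 2^j := by ring
        have e2 : (2:ℕ)^(k'+1) = 2 * 2^k' := by ring
        have e3 : (2:ℕ)^(l'+1) = 2 * 2^l' := by ring
        have e4 : (2:ℕ)^(n'+1) = 2 * 2^n' := by ring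
        omega
      rcases ih k' l' n' h' with ⟨h1, h2⟩ | ⟨h1, h2⟩
      · left; omega
      · right; omega

lemma expand4 {m : ℕ} (c : Fin (m+1) → ℂ) (θ : ℝ) :
    (∑ j, c j * Complex.exp (θ * I) ^ (2^(j:ℕ)))^2
      * (starRingEnd ℂ (∑ j, c j * Complex.exp (θ * I) ^ (2^(j:ℕ))))^2
    = ∑ j, ∑ l, ∑ k, ∑ n,
        (c j * c k * starRingEnd ℂ (c l) * starRingEnd ℂ (c n)) *
          Complex.exp (((((2^(j:ℕ) + 2^(k:ℕ) : ℕ) : ℤ)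
            - ((2^(l:ℕ) + 2^(n:ℕ) : ℕ) : ℤ)) : ℤ) * θ * I) := by
  set a : Fin (m+1) → ℂ := fun j => c j * Complex.exp (((2^(j:ℕ) : ℕ) : ℂ) * (θ*I)) with ha
  set b : Fin (m+1) → ℂ :=
    fun l => starRingEnd ℂ (c l) * Complex.exp (-(((2^(l:ℕ) : ℕ) : ℂ) * (θ*I))) with hb
  have h1 : (∑ j, c j * Complex.exp (θ * I) ^ (2^(j:ℕ))) = ∑ j, a j := by
    refine Finset.sum_congr rfl fun j _ => ?_
    rw [ha]; rw [← Complex.exp_nat_mul]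
  have h2 : starRingEnd ℂ (∑ j, c j * Complex.exp (θ * I) ^ (2^(j:ℕ))) = ∑ l, b l := by
    rw [map_sum]
    refine Finset.sum_congr rfl fun l _ => ?_
    rw [map_mul, hb]
    congr 1
    rw [← Complex.exp_nat_mul, ← Complex.exp_conj]
    congr 1
    simp only [map_mul, Complex.conj_I, Complex.conj_ofReal, map_natCast]
    ring
  rw [h2, h1, sq, sq, Finset.sum_mul_sum, Finset.sum_mul_sum, Finset.sum_mul_sum]
  refine Finset.sum_congr rfl fun j _ => ?_
  refine Finset.sum_congr rfl fun l _ => ?_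
  rw [Finset.sum_mul_sum]
  refine Finset.sum_congr rfl fun k _ => ?_
  refine Finset.sum_congr rfl fun n _ => ?_
  rw [ha, hb]
  rw [show ((((2^(j:ℕ) + 2^(k:ℕ) : ℕ) : ℤ) - ((2^(l:ℕ) + 2^(n:ℕ) : ℕ) : ℤ) : ℤ) : ℂ) * θ * I
      = ((2^(j:ℕ) : ℕ) : ℂ) * (θ*I) + (((2^(k:ℕ) : ℕ) : ℂ) * (θ*I))
        + (-(((2^(l:ℕ) : ℕ) : ℂ) * (θ*I)) + -(((2^(n:ℕ) : ℕ) : ℂ) * (θ*I))) by push_cast; ring,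
    Complex.exp_add, Complex.exp_add, Complex.exp_add]
  ring

lemma expand2 {m : ℕ} (c : Fin (m+1) → ℂ) (θ : ℝ) :
    (∑ j, c j * Complex.exp (θ * I) ^ (2^(j:ℕ)))
      * (starRingEnd ℂ (∑ j, c j * Complex.exp (θ * I) ^ (2^(j:ℕ))))
    = ∑ j, ∑ l,
        (c j * starRingEnd ℂ (c l)) *
          Complex.exp (((((2^(j:ℕ) : ℕ) : ℤ) - ((2^(l:ℕ) : ℕ) : ℤ)) : ℤ) * θ * I) := by
  set a : Fin (m+1) → ℂ := fun j => c j * Complex.exp (((2^(j:ℕ) : ℕ) : ℂ) * (θ*I)) with ha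
  set b : Fin (m+1) → ℂ :=
    fun l => starRingEnd ℂ (c l) * Complex.exp (-(((2^(l:ℕ) : ℕ) : ℂ) * (θ*I))) with hb
  have h1 : (∑ j, c j * Complex.exp (θ * I) ^ (2^(j:ℕ))) = ∑ j, a j := by
    refine Finset.sum_congr rfl fun j _ => ?_
    rw [ha]; rw [← Complex.exp_nat_mul]
  have h2 : starRingEnd ℂ (∑ j, c j * Complex.exp (θ * I) ^ (2^(j:ℕ))) = ∑ l, b l := by
    rw [map_sum]
    refine Finset.sum_congr rfl fun l _ => ?_
    rw [map_mul, hb]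
    congr 1
    rw [← Complex.exp_nat_mul, ← Complex.exp_conj]
    congr 1
    simp only [map_mul, Complex.conj_I, Complex.conj_ofReal, map_natCast]
    ring
  rw [h2, h1, Finset.sum_mul_sum]
  refine Finset.sum_congr rfl fun j _ => ?_
  refine Finset.sum_congr rfl fun l _ => ?_
  rw [ha, hb]
  rw [show ((((2^(j:ℕ) : ℕ) : ℤ) - ((2^(l:ℕ) : ℕ) : ℤ) : ℤ) : ℂ) * θ * I
      = ((2^(j:ℕ) : ℕ) : ℂ) * (θ*I) + -(((2^(l:ℕ) : ℕ) : ℂ) * (θ*I)) by push_cast; ring,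
    Complex.exp_add]
  ring

/-- there is `C > 0` such that every lacunary polynomial
`f(z) = Σ_{j=0}^m c_j z^{2^j}` satisfies
`(1/2π) ∫_𝕋 |f|⁴ ≤ C ((1/2π) ∫_𝕋 |f|²)²`, with the circle parametrized as `z = e^{iθ}`. -/
theorem stmt5 :
    ∃ C : ℝ, 0 < C ∧ ∀ (m : ℕ) (c : Fin (m + 1) → ℂ),
      (1 / (2 * Real.pi)) * ∫ θ in (0:ℝ)..(2 * Real.pi),
          ‖∑ j, c j * Complex.exp (θ * Complex.I) ^ (2 ^ (j:ℕ))‖ ^ 4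
        ≤ C * ((1 / (2 * Real.pi)) * ∫ θ in (0:ℝ)..(2 * Real.pi),
          ‖∑ j, c j * Complex.exp (θ * Complex.I) ^ (2 ^ (j:ℕ))‖ ^ 2) ^ 2 := by
  refine ⟨2, by norm_num, fun m c => ?_⟩
  set F : ℝ → ℂ := fun θ => ∑ j, c j * Complex.exp (θ * I) ^ (2^(j:ℕ)) with hF
  set A : ℝ := ∑ j, ‖c j‖ ^ 2 with hA
  have hπ : (0:ℝ) < Real.pi := Real.pi_pos
  -- index types
  -- the |f|^2 integral equals A
  have h2 : (∫ θ in (0:ℝ)..(2 * Real.pi), ‖F θ‖ ^ 2) = 2 * Real.pi * A := by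
    have hptwise : ∀ θ : ℝ, (‖F θ‖ ^ 2 : ℝ)
        = (∑ p : Fin (m+1) × Fin (m+1),
            (c p.1 * starRingEnd ℂ (c p.2)) *
              Complex.exp (((((2^(p.1:ℕ) : ℕ) : ℤ) - ((2^(p.2:ℕ) : ℕ) : ℤ)) : ℤ) * θ * I)).re := by
      intro θ
      rw [Fintype.sum_prod_type, ← expand2 c θ, Complex.mul_conj, Complex.ofReal_re,
        ← Complex.sq_norm]
    rw [intervalIntegral.integral_congr (g :=
      fun θ : ℝ => (∑ p : Fin (m+1) × Fin (m+1),
            (c p.1 * starRingEnd ℂ (c p.2)) *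
              Complex.exp (((((2^(p.1:ℕ) : ℕ) : ℤ) - ((2^(p.2:ℕ) : ℕ) : ℤ)) : ℤ) * θ * I)).re)
      (fun θ _ => hptwise θ)]
    have hint : IntervalIntegrable (fun θ : ℝ => ∑ p : Fin (m+1) × Fin (m+1),
            (c p.1 * starRingEnd ℂ (c p.2)) *
              Complex.exp (((((2^(p.1:ℕ) : ℕ) : ℤ) - ((2^(p.2:ℕ) : ℕ) : ℤ)) : ℤ) * θ * I))
        MeasureTheory.volume 0 (2*Real.pi) := by
      apply Continuous.intervalIntegrable; fun_prop
    rw [show (fun θ : ℝ => (∑ p : Fin (m+1) × Fin (m+1),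
            (c p.1 * starRingEnd ℂ (c p.2)) *
              Complex.exp (((((2^(p.1:ℕ) : ℕ) : ℤ) - ((2^(p.2:ℕ) : ℕ) : ℤ)) : ℤ) * θ * I)).re)
        = fun θ : ℝ => Complex.reCLM (∑ p : Fin (m+1) × Fin (m+1),
            (c p.1 * starRingEnd ℂ (c p.2)) *
              Complex.exp (((((2^(p.1:ℕ) : ℕ) : ℤ) - ((2^(p.2:ℕ) : ℕ) : ℤ)) : ℤ) * θ * I)) from rfl,
      Complex.reCLM.intervalIntegral_comp_comm hint]
    rw [int_sum (fun p : Fin (m+1) × Fin (m+1) => c p.1 * starRingEnd ℂ (c p.2))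
      (fun p : Fin (m+1) × Fin (m+1) => (((2^(p.1:ℕ) : ℕ) : ℤ) - ((2^(p.2:ℕ) : ℕ) : ℤ)))]
    have hd : ∀ p : Fin (m+1) × Fin (m+1),
        ((((2^(p.1:ℕ) : ℕ) : ℤ) - ((2^(p.2:ℕ) : ℕ) : ℤ)) = 0) ↔ p.2 = p.1 := by
      intro p
      constructor
      · intro h
        have : (2:ℕ)^(p.1:ℕ) = 2^(p.2:ℕ) := by omega
        have := Nat.pow_right_injective (le_refl 2) this
        exact Fin.ext this.symm
      · intro h; rw [h]; ring
    have : (∑ p : Fin (m+1) × Fin (m+1), (c p.1 * starRingEnd ℂ (c p.2)) *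
        (if (((2^(p.1:ℕ) : ℕ) : ℤ) - ((2^(p.2:ℕ) : ℕ) : ℤ)) = 0 then (2*Real.pi:ℂ) else 0))
        = ((2 * Real.pi * A : ℝ) : ℂ) := by
      calc (∑ p : Fin (m+1) × Fin (m+1), (c p.1 * starRingEnd ℂ (c p.2)) *
            (if (((2^(p.1:ℕ) : ℕ) : ℤ) - ((2^(p.2:ℕ) : ℕ) : ℤ)) = 0 then (2*Real.pi:ℂ) else 0))
          = ∑ p : Fin (m+1) × Fin (m+1),
            (if p.2 = p.1 then (c p.1 * starRingEnd ℂ (c p.2)) * (2*Real.pi:ℂ) else 0) := by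
            refine Finset.sum_congr rfl fun p _ => ?_
            by_cases h : p.2 = p.1
            · rw [if_pos ((hd p).2 h), if_pos h]
            · rw [if_neg (fun hh => h ((hd p).1 hh)), if_neg h, mul_zero]
        _ = ∑ j : Fin (m+1), (c j * starRingEnd ℂ (c j)) * (2*Real.pi:ℂ) := by
            rw [Fintype.sum_prod_type]
            refine Finset.sum_congr rfl fun j _ => ?_
            simp
        _ = ((2 * Real.pi * A : ℝ) : ℂ) := by
            simp only [Complex.mul_conj, ← Complex.sq_norm, hA]
            push_cast
            rw [Finset.mul_sum]
            exact Finset.sum_congr rfl fun j _ => by ring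
    rw [this]
    simp
  -- the |f|^4 integral is at most 2 * (2π) * A^2 ... we show (1/2π)∫ ≤ 2 A^2
  have h4 : (∫ θ in (0:ℝ)..(2 * Real.pi), ‖F θ‖ ^ 4) ≤ 2 * Real.pi * (2 * A^2) := by
    set t4 : Fin (m+1) × Fin (m+1) × Fin (m+1) × Fin (m+1) → ℂ :=
      fun p => c p.1 * c p.2.2.1 * starRingEnd ℂ (c p.2.1) * starRingEnd ℂ (c p.2.2.2) with ht4
    set d4 : Fin (m+1) × Fin (m+1) × Fin (m+1) × Fin (m+1) → ℤ :=
      fun p => ((2^(p.1:ℕ) + 2^(p.2.2.1:ℕ) : ℕ) : ℤ) - ((2^(p.2.1:ℕ) + 2^(p.2.2.2:ℕ) : ℕ) : ℤ)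
      with hd4
    have hptwise : ∀ θ : ℝ, (‖F θ‖ ^ 4 : ℝ)
        = (∑ p, t4 p * Complex.exp ((d4 p : ℂ) * θ * I)).re := by
      intro θ
      have e1 : (∑ p, t4 p * Complex.exp ((d4 p : ℂ) * θ * I))
          = (F θ)^2 * (starRingEnd ℂ (F θ))^2 := by
        rw [expand4 c θ]
        simp only [Fintype.sum_prod_type, ht4, hd4]
      rw [e1]
      have e2 : (F θ)^2 * (starRingEnd ℂ (F θ))^2 = ((‖F θ‖ : ℂ))^4 := by
        rw [← mul_pow, Complex.mul_conj]
        rw [Complex.normSq_eq_norm_sq]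
        push_cast
        ring
      rw [e2, ← Complex.ofReal_pow, Complex.ofReal_re]
    rw [intervalIntegral.integral_congr
      (g := fun θ : ℝ => (∑ p, t4 p * Complex.exp ((d4 p : ℂ) * θ * I)).re)
      (fun θ _ => hptwise θ)]
    have hint : IntervalIntegrable (fun θ : ℝ => ∑ p, t4 p * Complex.exp ((d4 p : ℂ) * θ * I))
        MeasureTheory.volume 0 (2*Real.pi) := by
      apply Continuous.intervalIntegrable; fun_prop
    rw [show (fun θ : ℝ => (∑ p, t4 p * Complex.exp ((d4 p : ℂ) * θ * I)).re)
        = fun θ : ℝ => Complex.reCLM (∑ p, t4 p * Complex.exp ((d4 p : ℂ) * θ * I)) from rfl,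
      Complex.reCLM.intervalIntegral_comp_comm hint]
    rw [int_sum t4 d4]
    -- bound the real part by sum of absolute values
    set W : Fin (m+1) × Fin (m+1) × Fin (m+1) × Fin (m+1) → ℝ :=
      fun p => ‖c p.1‖ * ‖c p.2.2.1‖
        * ‖c p.2.1‖ * ‖c p.2.2.2‖ with hW
    have hWnn : ∀ p, 0 ≤ W p := fun p => by rw [hW]; positivity
    have habs : ∀ p, ‖t4 p * (if d4 p = 0 then (2*Real.pi:ℂ) else 0)‖
        = if d4 p = 0 then 2*Real.pi * W p else 0 := by
      intro p
      by_cases h : d4 p = 0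
      · rw [if_pos h, if_pos h, norm_mul]
        have h2pi : ‖(2*Real.pi : ℂ)‖ = 2*Real.pi := by
          rw [show ((2*Real.pi:ℂ)) = ((2*Real.pi : ℝ) : ℂ) by push_cast; rfl,
            Complex.norm_real, Real.norm_eq_abs, abs_of_pos (by positivity)]
        rw [h2pi, ht4, hW]
        simp only [norm_mul, Complex.norm_conj]
        ring
      · rw [if_neg h, if_neg h, mul_zero, norm_zero]
    have hb1 : ((∑ p, t4 p * (if d4 p = 0 then (2*Real.pi:ℂ) else 0)) : ℂ).re
        ≤ ‖∑ p, t4 p * (if d4 p = 0 then (2*Real.pi:ℂ) else 0)‖ :=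
      Complex.re_le_norm _
    have hb2 : ‖∑ p, t4 p * (if d4 p = 0 then (2*Real.pi:ℂ) else 0)‖
        ≤ ∑ p, (if d4 p = 0 then 2*Real.pi * W p else 0) := by
      refine le_trans (norm_sum_le _ _) ?_
      exact le_of_eq (Finset.sum_congr rfl fun p _ => habs p)
    have hsplit : (∑ p, (if d4 p = 0 then 2*Real.pi * W p else 0))
        ≤ (∑ p, (if p.2.1 = p.1 ∧ p.2.2.2 = p.2.2.1 then 2*Real.pi * W p else 0))
          + (∑ p, (if p.2.1 = p.2.2.1 ∧ p.2.2.2 = p.1 then 2*Real.pi * W p else 0)) := by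
      rw [← Finset.sum_add_distrib]
      refine Finset.sum_le_sum fun p _ => ?_
      by_cases h : d4 p = 0
      · have hcond : ((p.2.1:ℕ) = (p.1:ℕ) ∧ (p.2.2.2:ℕ) = (p.2.2.1:ℕ))
            ∨ ((p.2.1:ℕ) = (p.2.2.1:ℕ) ∧ (p.2.2.2:ℕ) = (p.1:ℕ)) := by
          apply pow2_unique (p.1:ℕ) (p.2.2.1:ℕ) (p.2.1:ℕ) (p.2.2.2:ℕ)
          have h' := h
          rw [hd4] at h'
          have h'' := sub_eq_zero.mp h'
          exact_mod_cast h''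
        rw [if_pos h]
        rcases hcond with ⟨ha, hb⟩ | ⟨ha, hb⟩
        · have e1 : (if p.2.1 = p.1 ∧ p.2.2.2 = p.2.2.1 then 2*Real.pi * W p else 0)
              = 2*Real.pi * W p := if_pos ⟨Fin.ext ha, Fin.ext hb⟩
          have e2 : (0:ℝ) ≤ (if p.2.1 = p.2.2.1 ∧ p.2.2.2 = p.1 then 2*Real.pi * W p else 0) := by
            split <;> positivity
          rw [e1]; linarith
        · have e1 : (if p.2.1 = p.2.2.1 ∧ p.2.2.2 = p.1 then 2*Real.pi * W p else 0)
              = 2*Real.pi * W p := if_pos ⟨Fin.ext ha, Fin.ext hb⟩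
          have e2 : (0:ℝ) ≤ (if p.2.1 = p.1 ∧ p.2.2.2 = p.2.2.1 then 2*Real.pi * W p else 0) := by
            split <;> positivity
          rw [e1]; linarith
      · rw [if_neg h]
        have h1 : (0:ℝ) ≤ (if p.2.1 = p.1 ∧ p.2.2.2 = p.2.2.1 then 2*Real.pi * W p else 0) := by
          split <;> positivity
        have h2 : (0:ℝ) ≤ (if p.2.1 = p.2.2.1 ∧ p.2.2.2 = p.1 then 2*Real.pi * W p else 0) := by
          split <;> positivity
        linarith
    have hA2 : A^2 = ∑ j, ∑ k, (‖c j‖)^2 * (‖c k‖)^2 := by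
      rw [hA, sq, Finset.sum_mul_sum]
    have hT1 : (∑ p, (if p.2.1 = p.1 ∧ p.2.2.2 = p.2.2.1 then 2*Real.pi * W p else 0))
        = 2*Real.pi * A^2 := by
      simp only [Fintype.sum_prod_type]
      have e_n : ∀ (j l k : Fin (m+1)),
          (∑ n, (if l = j ∧ n = k then 2*Real.pi * W (j, l, k, n) else 0))
            = if l = j then 2*Real.pi * W (j, l, k, k) else 0 := by
        intro j l k
        by_cases h : l = j <;> simp [h]
      simp only [e_n]
      have e_k : ∀ (j l : Fin (m+1)),
          (∑ k, (if l = j then 2*Real.pi * W (j, l, k, k) else 0))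
            = if l = j then ∑ k, 2*Real.pi * W (j, l, k, k) else 0 := by
        intro j l
        by_cases h : l = j <;> simp [h]
      simp only [e_k]
      simp only [Finset.sum_ite_eq', Finset.mem_univ, if_true]
      rw [hA2, Finset.mul_sum]
      refine Finset.sum_congr rfl fun j _ => ?_
      rw [Finset.mul_sum]
      refine Finset.sum_congr rfl fun k _ => ?_
      rw [hW]
      ring
    have hT2 : (∑ p, (if p.2.1 = p.2.2.1 ∧ p.2.2.2 = p.1 then 2*Real.pi * W p else 0))
        = 2*Real.pi * A^2 := by
      simp only [Fintype.sum_prod_type]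
      have e_n : ∀ (j l k : Fin (m+1)),
          (∑ n, (if l = k ∧ n = j then 2*Real.pi * W (j, l, k, n) else 0))
            = if l = k then 2*Real.pi * W (j, l, k, j) else 0 := by
        intro j l k
        by_cases h : l = k <;> simp [h]
      simp only [e_n]
      simp only [Finset.sum_ite_eq, Finset.mem_univ, if_true]
      rw [hA2, Finset.mul_sum]
      refine Finset.sum_congr rfl fun j _ => ?_
      rw [Finset.mul_sum]
      refine Finset.sum_congr rfl fun l _ => ?_
      rw [hW]
      ring
    have : ((∑ p, t4 p * (if d4 p = 0 then (2*Real.pi:ℂ) else 0)) : ℂ).re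
        ≤ 2*Real.pi*(2*A^2) := by
      calc ((∑ p, t4 p * (if d4 p = 0 then (2*Real.pi:ℂ) else 0)) : ℂ).re
          ≤ ∑ p, (if d4 p = 0 then 2*Real.pi * W p else 0) := le_trans hb1 hb2
        _ ≤ (∑ p, (if p.2.1 = p.1 ∧ p.2.2.2 = p.2.2.1 then 2*Real.pi * W p else 0))
          + (∑ p, (if p.2.1 = p.2.2.1 ∧ p.2.2.2 = p.1 then 2*Real.pi * W p else 0)) := hsplit
        _ = 2*Real.pi*(2*A^2) := by rw [hT1, hT2]; ring
    exact this
  -- conclude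
  have hLHS : (1 / (2 * Real.pi)) * (∫ θ in (0:ℝ)..(2 * Real.pi), ‖F θ‖ ^ 4)
      ≤ 2 * A^2 := by
    rw [div_mul_eq_mul_div, one_mul, div_le_iff₀ (by positivity)]
    calc (∫ θ in (0:ℝ)..(2 * Real.pi), ‖F θ‖ ^ 4) ≤ 2*Real.pi*(2*A^2) := h4
      _ = 2 * A ^ 2 * (2 * Real.pi) := by ring
  have hRHS : (1 / (2 * Real.pi)) * (∫ θ in (0:ℝ)..(2 * Real.pi), ‖F θ‖ ^ 2) = A := by
    rw [h2]; field_simp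
  calc (1 / (2 * Real.pi)) * (∫ θ in (0:ℝ)..(2 * Real.pi), ‖F θ‖ ^ 4)
      ≤ 2 * A^2 := hLHS
    _ = 2 * ((1 / (2 * Real.pi)) * ∫ θ in (0:ℝ)..(2 * Real.pi), ‖F θ‖ ^ 2) ^ 2 := by
        rw [hRHS]
end
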